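/- Let M ∈ ℝ^{m×m} be symmetric, c ∈ ℝ^m, and E(x) = xᵀMx + cᵀx. Let S ⊂ ℝ^m be a finite set and K = conv(S) its convex hull. If x* ∈ K is a local minimum of E on K and x* is not an extreme point of K, then there exist distinct extreme points y, z of K with (y − z)ᵀ M (y − z) ≥ 0. -/

import Mathlib

open Matrix

private lemma quad_expand {m : ℕ} (M : Matrix (Fin m) (Fin m) ℝ) (c : Fin m → ℝ)
    (E : (Fin m → ℝ) → ℝ) (hE : ∀ x, E x = x ⬝ᵥ M *ᵥ x + c ⬝ᵥ x)
    (a d : Fin m → ℝ) (t : ℝ) :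
    E (a + t • d) + E (a - t • d) = 2 * E a + 2 * t^2 * (d ⬝ᵥ M *ᵥ d) := by
  simp only [hE, mulVec_add, mulVec_sub, mulVec_smul, dotProduct_add, add_dotProduct,
    dotProduct_sub, sub_dotProduct, dotProduct_smul, smul_dotProduct, smul_eq_mul]
  ring

/-- Let `E(x) = xᵀ M x + cᵀ x` with `M` symmetric, and let `K = conv S` be the convex hull of a
finite set `S ⊂ ℝ^m`. If `x*` is a local minimum of `E` on `K` that is not an extreme point of
`K`, then there exist distinct extreme points `y, z` of `K` with `(y - z)ᵀ M (y - z) ≥ 0`. -/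
theorem local_min_not_extreme_gives_nonneg_direction
    {m : ℕ} (M : Matrix (Fin m) (Fin m) ℝ) (hM : Mᵀ = M) (c : Fin m → ℝ)
    (E : (Fin m → ℝ) → ℝ) (hE : ∀ x, E x = x ⬝ᵥ M *ᵥ x + c ⬝ᵥ x)
    (S : Finset (Fin m → ℝ))
    (K : Set (Fin m → ℝ)) (hK : K = convexHull ℝ (S : Set (Fin m → ℝ)))
    (xstar : Fin m → ℝ) (hxK : xstar ∈ K)
    (hmin : IsLocalMinOn E K xstar)
    (hnotext : xstar ∉ Set.extremePoints ℝ K) :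
    ∃ y ∈ Set.extremePoints ℝ K, ∃ z ∈ Set.extremePoints ℝ K,
      y ≠ z ∧ 0 ≤ (y - z) ⬝ᵥ M *ᵥ (y - z) := by
  classical
  -- K is compact and convex
  have hKconv : Convex ℝ K := hK ▸ convex_convexHull ℝ _
  have hKcomp : IsCompact K := hK ▸ S.finite_toSet.isCompact_convexHull (𝕜 := ℝ)
  -- extreme points are finite (subset of S)
  have hsubS : Set.extremePoints ℝ K ⊆ (S : Set (Fin m → ℝ)) := by
    rw [hK]; exact extremePoints_convexHull_subset
  have hfin : (Set.extremePoints ℝ K).Finite := S.finite_toSet.subset hsubS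
  -- Krein-Milman: K = convexHull of extreme points
  have hKM : convexHull ℝ (Set.extremePoints ℝ K) = K := by
    have h1 : closure (convexHull ℝ (Set.extremePoints ℝ K)) = K :=
      closure_convexHull_extremePoints hKcomp hKconv
    have h2 : IsClosed (convexHull ℝ (Set.extremePoints ℝ K)) :=
      (hfin.isCompact_convexHull (𝕜 := ℝ)).isClosed
    rw [← h2.closure_eq, h1]
  set T : Finset (Fin m → ℝ) := hfin.toFinset with hT
  have hTcoe : (T : Set (Fin m → ℝ)) = Set.extremePoints ℝ K := hfin.coe_toFinset
  have hxT : xstar ∈ convexHull ℝ (T : Set (Fin m → ℝ)) := by rw [hTcoe, hKM]; exact hxK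
  obtain ⟨w, hw0, hw1, hwx⟩ := Finset.mem_convexHull'.1 hxT
  -- support of w
  set P : Finset (Fin m → ℝ) := T.filter (fun s => 0 < w s) with hP
  have hzero : ∀ s ∈ T, s ∉ P → w s = 0 := by
    intro s hs hsP
    have := hw0 s hs
    by_contra h
    exact hsP (Finset.mem_filter.2 ⟨hs, lt_of_le_of_ne this (Ne.symm h)⟩)
  have hsum1 : ∑ s ∈ P, w s = 1 := by
    rw [← hw1]
    exact Finset.sum_subset (Finset.filter_subset _ _) hzero
  -- P has at least two elements
  have hPnonempty : P.Nonempty := by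
    by_contra h
    rw [Finset.not_nonempty_iff_eq_empty] at h
    rw [h, Finset.sum_empty] at hsum1
    norm_num at hsum1
  obtain ⟨y, hyP⟩ := hPnonempty
  have h2 : ∃ z ∈ P, z ≠ y := by
    by_contra h
    push_neg at h
    -- P = {y}, so xstar = y, extreme, contradiction
    have hPy : P = {y} := by
      apply Finset.eq_singleton_iff_unique_mem.2 ⟨hyP, fun z hz => h z hz⟩
    have hwy : w y = 1 := by rw [hPy, Finset.sum_singleton] at hsum1; exact hsum1
    have hx_eq : xstar = y := by
      rw [← hwx]
      rw [← Finset.sum_subset (Finset.filter_subset (fun s => 0 < w s) T)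
        (fun s hs hsP => by rw [hzero s hs hsP, zero_smul])]
      rw [← hP, hPy, Finset.sum_singleton, hwy, one_smul]
    exact hnotext (hx_eq ▸ (hTcoe ▸ (Finset.mem_coe.2 (Finset.filter_subset _ _ hyP))))
  obtain ⟨z, hzP, hzy⟩ := h2
  have hyT : y ∈ T := (Finset.mem_filter.1 hyP).1
  have hzT : z ∈ T := (Finset.mem_filter.1 hzP).1
  have hwy : 0 < w y := (Finset.mem_filter.1 hyP).2
  have hwz : 0 < w z := (Finset.mem_filter.1 hzP).2
  have hyext : y ∈ Set.extremePoints ℝ K := hTcoe ▸ Finset.mem_coe.2 hyT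
  have hzext : z ∈ Set.extremePoints ℝ K := hTcoe ▸ Finset.mem_coe.2 hzT
  refine ⟨y, hyext, z, hzext, hzy.symm, ?_⟩
  set d : Fin m → ℝ := y - z with hd
  -- membership of perturbations in K
  have hmem : ∀ t : ℝ, |t| ≤ min (w y) (w z) → xstar + t • d ∈ K := by
    intro t ht
    have hty : -(w y) ≤ t := by
      have := (abs_le.1 ht).1
      linarith [min_le_left (w y) (w z)]
    have htz : t ≤ w z := le_trans (le_abs_self t) (le_trans ht (min_le_right _ _))
    rw [← hKM, ← hTcoe]
    apply Finset.mem_convexHull'.2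
    refine ⟨fun s => w s + (if s = y then t else 0) - (if s = z then t else 0), ?_, ?_, ?_⟩
    · intro s hs
      have hws := hw0 s hs
      dsimp only
      split_ifs with h1 h2 h2
      · exact absurd (h2.symm.trans h1) hzy
      · subst h1; linarith
      · subst h2; linarith
      · linarith
    · simp only [Finset.sum_sub_distrib, Finset.sum_add_distrib,
        Finset.sum_ite_eq' T y (fun _ => t), Finset.sum_ite_eq' T z (fun _ => t),
        if_pos hyT, if_pos hzT, hw1]
      ring
    · simp only [sub_smul, add_smul, ite_smul, zero_smul, Finset.sum_sub_distrib,
        Finset.sum_add_distrib, Finset.sum_ite_eq' T y, Finset.sum_ite_eq' T z,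
        if_pos hyT, if_pos hzT, hwx]
      rw [hd, smul_sub]
      abel
  -- extract a neighborhood from local minimality
  have hmin' := hmin
  rw [IsLocalMinOn, IsMinFilter, nhdsWithin, Filter.eventually_inf_principal] at hmin'
  obtain ⟨U, hU, hUsub⟩ := hmin'.exists_mem
  obtain ⟨δ, hδ, hball⟩ := Metric.mem_nhds_iff.1 hU
  set ε : ℝ := min (min (w y) (w z)) (δ / (2 * (‖d‖ + 1))) with hε
  have hεpos : 0 < ε := by
    apply lt_min (lt_min hwy hwz)
    positivity
  have hnorm : ∀ t : ℝ, |t| ≤ ε → xstar + t • d ∈ Metric.ball xstar δ := by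
    intro t ht
    rw [Metric.mem_ball, dist_eq_norm]
    have : xstar + t • d - xstar = t • d := by abel
    rw [this, norm_smul, Real.norm_eq_abs]
    have h1 : |t| ≤ δ / (2 * (‖d‖ + 1)) := le_trans ht (min_le_right _ _)
    have h2 : |t| * ‖d‖ ≤ δ / (2 * (‖d‖ + 1)) * (‖d‖ + 1) := by
      apply mul_le_mul h1 (by linarith [norm_nonneg d]) (norm_nonneg d)
      positivity
    have h3 : δ / (2 * (‖d‖ + 1)) * (‖d‖ + 1) = δ / 2 := by
      field_simp
    linarith
  have hkey : ∀ t : ℝ, |t| ≤ ε → E xstar ≤ E (xstar + t • d) := by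
    intro t ht
    have htm : |t| ≤ min (w y) (w z) := le_trans ht (min_le_left _ _)
    exact hUsub _ (hball (hnorm t ht)) (hmem t htm)
  have h1 : E xstar ≤ E (xstar + ε • d) := hkey ε (by rw [abs_of_pos hεpos])
  have h2 : E xstar ≤ E (xstar - ε • d) := by
    have := hkey (-ε) (by rw [abs_neg, abs_of_pos hεpos])
    rwa [neg_smul, ← sub_eq_add_neg] at this
  have hsum := quad_expand M c E hE xstar d ε
  nlinarith [mul_pos hεpos hεpos]
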